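/- An epic quiver map φ : G → H is epi-coessential if and only if: (1) the edge map E(φ) is bijective; (2) φ maps independent vertices of G to independent vertices of H; and (3) every independent vertex of H has a unique independent-vertex preimage in G. -/

import Mathlib

open CategoryTheory

/-- A quiver (directed multigraph): vertices, edges, source and target maps. -/
structure Quiv' where
  V : Type
  E : Type
  s : E → V
  t : E → V

/-- A quiver homomorphism: a vertex map and an edge map commuting with source/target. -/
@[ext]
structure QuivHom (G H : Quiv') where
  vMap : G.V → H.V
  eMap : G.E → H.E
  comm_s : ∀ e, vMap (G.s e) = H.s (eMap e)
  comm_t : ∀ e, vMap (G.t e) = H.t (eMap e)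

def QuivHom.id' (G : Quiv') : QuivHom G G where
  vMap := id
  eMap := id
  comm_s _ := rfl
  comm_t _ := rfl

def QuivHom.comp' {G H K : Quiv'} (f : QuivHom G H) (g : QuivHom H K) : QuivHom G K where
  vMap := g.vMap ∘ f.vMap
  eMap := g.eMap ∘ f.eMap
  comm_s e := by simp only [Function.comp_apply, f.comm_s, g.comm_s]
  comm_t e := by simp only [Function.comp_apply, f.comm_t, g.comm_t]

instance : Category Quiv' where
  Hom := QuivHom
  id := QuivHom.id'
  comp := QuivHom.comp'
  id_comp f := rfl
  comp_id f := rfl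
  assoc f g h := rfl

/-- `I(S)`: the empty quiver (independent set of vertices) on `S`. -/
def IQ (S : Type) : Quiv' := ⟨S, Empty, Empty.elim, Empty.elim⟩

/-- `M(S)`: the independent set of edges on `S`. -/
def MQ (S : Type) : Quiv' := ⟨Fin 2 × S, S, fun x => (0, x), fun x => (1, x)⟩

/-- `K(S)`: the complete (full) quiver on `S`. -/
def KQ (S : Type) : Quiv' := ⟨S, S × S, Prod.fst, Prod.snd⟩

/-- `B(S)`: the bouquet on `S`. -/
def BQ (S : Type) : Quiv' := ⟨PUnit, S, fun _ => PUnit.unit, fun _ => PUnit.unit⟩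

/-- The vertex functor `V : Quiv → Set`. -/
def Vf : Quiv' ⥤ Type where
  obj G := G.V
  map φ := TypeCat.ofHom φ.vMap
  map_id _ := rfl
  map_comp _ _ := rfl

/-- The edge functor `E : Quiv → Set`. -/
def Ef : Quiv' ⥤ Type where
  obj G := G.E
  map φ := TypeCat.ofHom φ.eMap
  map_id _ := rfl
  map_comp _ _ := rfl

/-- The empty-quiver functor `I : Set → Quiv`. -/
def If : Type ⥤ Quiv' where
  obj := IQ
  map f := ⟨f, id, fun e => e.elim, fun e => e.elim⟩
  map_id _ := rfl
  map_comp _ _ := rfl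

/-- The independent-edges functor `M : Set → Quiv`. -/
def Mf : Type ⥤ Quiv' where
  obj := MQ
  map f := ⟨Prod.map id f, f, fun _ => rfl, fun _ => rfl⟩
  map_id _ := rfl
  map_comp _ _ := rfl

/-- The complete-quiver functor `K : Set → Quiv`. -/
def Kf : Type ⥤ Quiv' where
  obj := KQ
  map f := ⟨f, Prod.map f f, fun _ => rfl, fun _ => rfl⟩
  map_id _ := rfl
  map_comp _ _ := rfl

/-- The bouquet functor `B : Set → Quiv`. -/
def Bf : Type ⥤ Quiv' where
  obj := BQ
  map f := ⟨id, f, fun _ => rfl, fun _ => rfl⟩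
  map_id _ := rfl
  map_comp _ _ := rfl

/-- The set of edges of `G` with source `v` and target `w`. -/
def edgesBetween (G : Quiv') (v w : G.V) : Set G.E := {e | G.s e = v ∧ G.t e = w}

/-- A quiver is loaded if between any two vertices there is an edge. -/
def Loaded (J : Quiv') : Prop := ∀ v w : J.V, ∃ e : J.E, J.s e = v ∧ J.t e = w

/-- `J` is injective with respect to the morphism `φ`. -/
def InjectiveWrt (J : Quiv') {A B : Quiv'} (φ : A ⟶ B) : Prop :=
  ∀ ψ : A ⟶ J, ∃ ψ' : B ⟶ J, φ ≫ ψ' = ψ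

/-- `J` is injective with respect to all monomorphisms. -/
def MonoInjective (J : Quiv') : Prop :=
  ∀ ⦃A B : Quiv'⦄ (φ : A ⟶ B), Mono φ → ∀ ψ : A ⟶ J, ∃ ψ' : B ⟶ J, φ ≫ ψ' = ψ

/-- A monomorphism `φ` is mono-essential if composing with it reflects monicity. -/
def MonoEssential {D C : Quiv'} (φ : D ⟶ C) : Prop :=
  Mono φ ∧ ∀ ⦃A : Quiv'⦄ (α : C ⟶ A), Mono (φ ≫ α) → Mono α

/-- `P` is projective with respect to all epimorphisms. -/
def EpiProjective (P : Quiv') : Prop :=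
  ∀ ⦃A B : Quiv'⦄ (φ : A ⟶ B), Epi φ → ∀ ψ : P ⟶ B, ∃ γ : P ⟶ A, γ ≫ φ = ψ

/-- An epimorphism `φ` is epi-coessential if composing with it reflects epicity. -/
def EpiCoessential {G H : Quiv'} (φ : G ⟶ H) : Prop :=
  Epi φ ∧ ∀ ⦃A : Quiv'⦄ (α : A ⟶ G), Epi (α ≫ φ) → Epi α

/-- Disjoint union of two quivers. -/
def DU (G H : Quiv') : Quiv' :=
  ⟨G.V ⊕ H.V, G.E ⊕ H.E, Sum.map G.s H.s, Sum.map G.t H.t⟩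

/-- The loading of a quiver: add one edge between each pair of vertices having none. -/
def Loading (D : Quiv') : Quiv' where
  V := D.V
  E := D.E ⊕ {p : D.V × D.V // edgesBetween D p.1 p.2 = ∅}
  s := Sum.elim D.s (fun p => p.val.1)
  t := Sum.elim D.t (fun p => p.val.2)

/-- The canonical inclusion of a quiver into its loading. -/
def loadInc (D : Quiv') : D ⟶ Loading D where
  vMap := id
  eMap := Sum.inl
  comm_s _ := rfl
  comm_t _ := rfl

/-- A vertex is independent if it is incident to no edge. -/
def Indep (G : Quiv') (v : G.V) : Prop := (∀ e, G.s e ≠ v) ∧ (∀ e, G.t e ≠ v)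

/-- The explosion of a quiver `G`: `I(indep G) ⊔ M(E(G))`. -/
def Explosion (G : Quiv') : Quiv' := DU (IQ {v : G.V // Indep G v}) (MQ G.E)

/-- The covering map from the explosion of `G` onto `G`. -/
def coverMap (G : Quiv') : Explosion G ⟶ G where
  vMap := Sum.elim Subtype.val (fun p => if p.1 = 0 then G.s p.2 else G.t p.2)
  eMap := Sum.elim Empty.elim id
  comm_s e := by
    cases e with
    | inl e => exact e.elim
    | inr e => rfl
  comm_t e := by
    cases e with
    | inl e => exact e.elim
    | inr e => rfl

lemma comp_vMap' {G H K : Quiv'} (f : G ⟶ H) (g : H ⟶ K) :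
    (f ≫ g).vMap = g.vMap ∘ f.vMap := rfl

lemma comp_eMap' {G H K : Quiv'} (f : G ⟶ H) (g : H ⟶ K) :
    (f ≫ g).eMap = g.eMap ∘ f.eMap := rfl

lemma epi_iff_surj {G H : Quiv'} (φ : G ⟶ H) :
    Epi φ ↔ Function.Surjective φ.vMap ∧ Function.Surjective φ.eMap := by
  constructor
  · intro h
    constructor
    · -- vertex surjectivity via maps to KQ Prop
      let P : H.V → Prop := fun w => ∃ v, φ.vMap v = w
      let ψ1 : H ⟶ KQ Prop :=
        ⟨P, fun e => (P (H.s e), P (H.t e)), fun _ => rfl, fun _ => rfl⟩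
      let ψ2 : H ⟶ KQ Prop :=
        ⟨fun _ => True, fun _ => (True, True), fun _ => rfl, fun _ => rfl⟩
      have hcomp : φ ≫ ψ1 = φ ≫ ψ2 := by
        apply QuivHom.ext
        · funext v
          exact eq_true ⟨v, rfl⟩
        · funext e
          show (P (H.s (φ.eMap e)), P (H.t (φ.eMap e))) = (True, True)
          have h1 : P (H.s (φ.eMap e)) = True :=
            eq_true ⟨G.s e, φ.comm_s e⟩
          have h2 : P (H.t (φ.eMap e)) = True :=
            eq_true ⟨G.t e, φ.comm_t e⟩
          rw [h1, h2]
      have := h.left_cancellation ψ1 ψ2 hcomp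
      intro w
      have : P w = True := congrFun (congrArg QuivHom.vMap this) w
      exact of_eq_true this
    · -- edge surjectivity via maps to BQ Prop
      let P : H.E → Prop := fun f => ∃ e, φ.eMap e = f
      let ψ1 : H ⟶ BQ Prop :=
        ⟨fun _ => PUnit.unit, P, fun _ => rfl, fun _ => rfl⟩
      let ψ2 : H ⟶ BQ Prop :=
        ⟨fun _ => PUnit.unit, fun _ => True, fun _ => rfl, fun _ => rfl⟩
      have hcomp : φ ≫ ψ1 = φ ≫ ψ2 := by
        apply QuivHom.ext
        · rfl
        · funext e
          exact eq_true ⟨e, rfl⟩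
      have := h.left_cancellation ψ1 ψ2 hcomp
      intro f
      have : P f = True := congrFun (congrArg QuivHom.eMap this) f
      exact of_eq_true this
  · rintro ⟨hv, he⟩
    constructor
    intro Z ψ1 ψ2 hc
    apply QuivHom.ext
    · funext w
      obtain ⟨v, rfl⟩ := hv w
      exact congrFun (congrArg QuivHom.vMap hc) v
    · funext f
      obtain ⟨e, rfl⟩ := he f
      exact congrFun (congrArg QuivHom.eMap hc) e

theorem epi_coessential_iff (G H : Quiv') (φ : G ⟶ H) (hφ : CategoryTheory.Epi φ) :
    EpiCoessential φ ↔
      Function.Bijective φ.eMap ∧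
      (∀ v : G.V, Indep G v → Indep H (φ.vMap v)) ∧
      (∀ w : H.V, Indep H w → ∃! v : G.V, Indep G v ∧ φ.vMap v = w) := by
  obtain ⟨hv, he⟩ := (epi_iff_surj φ).mp hφ
  constructor
  · rintro ⟨-, hc⟩
    refine ⟨⟨?_, he⟩, ?_, ?_⟩
    · -- eMap injective
      intro e1 e2 heq
      by_contra hne
      let A : Quiv' := ⟨G.V, {e : G.E // e ≠ e2}, fun e => G.s e.val, fun e => G.t e.val⟩
      let α : A ⟶ G := ⟨id, Subtype.val, fun _ => rfl, fun _ => rfl⟩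
      have hepi : Epi (α ≫ φ) := by
        rw [epi_iff_surj]
        refine ⟨hv, ?_⟩
        intro f
        obtain ⟨e, rfl⟩ := he f
        by_cases h : e = e2
        · exact ⟨⟨e1, hne⟩, by simp [comp_eMap', α, h ▸ heq]⟩
        · exact ⟨⟨e, h⟩, rfl⟩
      have := ((epi_iff_surj α).mp (hc α hepi)).2
      obtain ⟨x, hx⟩ := this e2
      exact x.2 hx
    · -- indep vertices map to indep vertices
      intro v hvind
      by_contra hni
      have hinc : ∃ f, H.s f = φ.vMap v ∨ H.t f = φ.vMap v := by
        by_contra hno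
        push_neg at hno
        exact hni ⟨fun f => (hno f).1, fun f => (hno f).2⟩
      let A : Quiv' := ⟨{u : G.V // u ≠ v}, G.E,
        fun e => ⟨G.s e, hvind.1 e⟩, fun e => ⟨G.t e, hvind.2 e⟩⟩
      let α : A ⟶ G := ⟨Subtype.val, id, fun _ => rfl, fun _ => rfl⟩
      have hepi : Epi (α ≫ φ) := by
        rw [epi_iff_surj]
        refine ⟨?_, fun f => (he f).imp fun e h => h⟩
        intro w
        obtain ⟨u, rfl⟩ := hv w
        by_cases hu : u = v
        · subst hu
          obtain ⟨f, hf⟩ := hinc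
          obtain ⟨e, rfl⟩ := he f
          rcases hf with hf | hf
          · exact ⟨⟨G.s e, hvind.1 e⟩, by simpa [comp_vMap', α] using (φ.comm_s e).trans hf⟩
          · exact ⟨⟨G.t e, hvind.2 e⟩, by simpa [comp_vMap', α] using (φ.comm_t e).trans hf⟩
        · exact ⟨⟨u, hu⟩, rfl⟩
      have := ((epi_iff_surj α).mp (hc α hepi)).1
      obtain ⟨x, hx⟩ := this v
      exact x.2 hx
    · -- unique indep preimage
      intro w hw
      obtain ⟨v, rfl⟩ := hv w
      have hvind : Indep G v := by
        constructor
        · intro e hse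
          exact hw.1 (φ.eMap e) (((φ.comm_s e).symm.trans (congrArg φ.vMap hse)))
        · intro e hte
          exact hw.2 (φ.eMap e) (((φ.comm_t e).symm.trans (congrArg φ.vMap hte)))
      refine ⟨v, ⟨hvind, rfl⟩, ?_⟩
      rintro v2 ⟨h2ind, h2eq⟩
      by_contra hne
      let A : Quiv' := ⟨{u : G.V // u ≠ v2}, G.E,
        fun e => ⟨G.s e, h2ind.1 e⟩, fun e => ⟨G.t e, h2ind.2 e⟩⟩
      let α : A ⟶ G := ⟨Subtype.val, id, fun _ => rfl, fun _ => rfl⟩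
      have hepi : Epi (α ≫ φ) := by
        rw [epi_iff_surj]
        refine ⟨?_, fun f => (he f).imp fun e h => h⟩
        intro w'
        obtain ⟨u, rfl⟩ := hv w'
        by_cases hu : u = v2
        · exact ⟨⟨v, fun h => hne h.symm⟩, by simpa [comp_vMap', α, hu] using h2eq.symm⟩
        · exact ⟨⟨u, hu⟩, rfl⟩
      have := ((epi_iff_surj α).mp (hc α hepi)).1
      obtain ⟨x, hx⟩ := this v2
      exact x.2 hx
  · rintro ⟨⟨heinj, -⟩, hind, huniq⟩
    refine ⟨hφ, ?_⟩
    intro A α hepi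
    rw [epi_iff_surj] at hepi ⊢
    have hesurj : Function.Surjective α.eMap := by
      intro e
      obtain ⟨a, ha⟩ := hepi.2 (φ.eMap e)
      exact ⟨a, heinj ha⟩
    refine ⟨?_, hesurj⟩
    intro v
    by_cases hinc : ∃ e, G.s e = v ∨ G.t e = v
    · obtain ⟨e, he'⟩ := hinc
      obtain ⟨a, rfl⟩ := hesurj e
      rcases he' with h | h
      · exact ⟨A.s a, (α.comm_s a).trans h⟩
      · exact ⟨A.t a, (α.comm_t a).trans h⟩
    · push_neg at hinc
      have hvind : Indep G v := ⟨fun e => (hinc e).1, fun e => (hinc e).2⟩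
      obtain ⟨a, ha⟩ := hepi.1 (φ.vMap v)
      have haind : Indep G (α.vMap a) := by
        have hwind : Indep H (φ.vMap v) := hind v hvind
        constructor
        · intro e hse
          have : H.s (φ.eMap e) = φ.vMap v := by
            rw [← φ.comm_s, hse]; exact ha
          exact hwind.1 _ this
        · intro e hte
          have : H.t (φ.eMap e) = φ.vMap v := by
            rw [← φ.comm_t, hte]; exact ha
          exact hwind.2 _ this
      obtain ⟨u, -, hu⟩ := huniq (φ.vMap v) (hind v hvind)
      have h1 : α.vMap a = u := hu _ ⟨haind, ha⟩
      have h2 : v = u := hu _ ⟨hvind, rfl⟩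
      exact ⟨a, h1.trans h2.symm⟩
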